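/- Let Ω ⊂ ℝ^N be a bounded domain with diameter D, let 1 < p ≤ N, α = N/p, and let μ be a finite nonnegative Radon measure supported in Ω with μ(Ω) > 0. Then for any δ ∈ (0,1), ∫_Ω exp( N(1−δ) W^D_{α,p}[μ](x) / μ(Ω)^{1/(p−1)} ) dx ≤ c(N) |B_D(0)| / δ^{N+1}, where W^D_{α,p}[μ](x) = ∫_0^D μ(B_t(x))^{1/(p−1)} dt/t. -/

import Mathlib

open MeasureTheory Metric ENNReal Filter Topology

namespace Stmt7Aux

lemma integral_le_toReal_lintegral {α : Type*} [MeasurableSpace α] (ν : Measure α)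
    (g : α → ℝ) (hg : 0 ≤ᵐ[ν] g) :
    ∫ x, g x ∂ν ≤ (∫⁻ x, ENNReal.ofReal (g x) ∂ν).toReal := by
  by_cases h : Integrable g ν
  · rw [integral_eq_lintegral_of_nonneg_ae hg h.1]
  · rw [integral_undef h]; exact ENNReal.toReal_nonneg

lemma geom_sum_half (K : ℕ) : ∑ k ∈ Finset.range K, ((2:ℝ)⁻¹)^(k+1) = 1 - (2⁻¹)^K := by
  induction K with
  | zero => norm_num
  | succ K ih => rw [Finset.sum_range_succ, ih]; ring

lemma weight_sum_le (K : ℕ) :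
    ∑ k ∈ Finset.range K, ((k:ℝ)+1) * (2⁻¹)^(k+1) ≤ 2 - ((K:ℝ)+2) * 2⁻¹^K := by
  induction K with
  | zero => norm_num
  | succ K ih =>
    rw [Finset.sum_range_succ]
    push_cast
    have hp : (0:ℝ) ≤ 2⁻¹^K := by positivity
    have h2 : ((2:ℝ)⁻¹)^(K+1) = 2⁻¹^K * 2⁻¹ := by ring
    rw [h2]
    nlinarith [ih, hp]

lemma prod_rpow_eq (x : ℝ≥0∞) (hx0 : x ≠ 0) (hxt : x ≠ ⊤) (K : ℕ) (c : ℕ → ℝ) :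
    ∏ k ∈ Finset.range K, x ^ (c k) = x ^ (∑ k ∈ Finset.range K, c k) := by
  induction K with
  | zero => simp
  | succ K ih =>
    rw [Finset.sum_range_succ, Finset.prod_range_succ, ih, ENNReal.rpow_add _ _ hx0 hxt]

/-- The key scalar inequality: decomposition of the normalized power into dyadic mass levels. -/
lemma claimA {N : ℕ} (hN : 1 ≤ N) (hN2 : 2 ≤ N) {q : ℝ} (hq0 : 0 < q)
    (hq' : 1/((N:ℝ)-1) ≤ q)
    (m : ℝ≥0∞) (hm0 : m ≠ 0) (hmtop : m ≠ ⊤) (ν : ℝ≥0∞) (hν : ν ≤ m) :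
    ENNReal.ofReal (ν.toReal ^ q)
      ≤ ENNReal.ofReal (m.toReal ^ q) * ∑' k : ℕ, (2:ℝ≥0∞)⁻¹ ^ (k+1) *
          (if (2:ℝ≥0∞)⁻¹ ^ ((k+1)*(N-1)) * m ≤ ν then 1 else 0) := by
  have hνtop : ν ≠ ⊤ := (lt_of_le_of_lt hν hmtop.lt_top).ne
  have hMr0 : 0 < m.toReal := ENNReal.toReal_pos hm0 hmtop
  have hN1R : (1:ℝ) ≤ (N:ℝ) - 1 := by
    have : (2:ℝ) ≤ (N:ℝ) := by exact_mod_cast hN2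
    linarith
  have hθR : ∀ j : ℕ, ((2:ℝ≥0∞)⁻¹ ^ j * m).toReal = (2:ℝ)⁻¹ ^ j * m.toReal := by
    intro j
    rw [ENNReal.toReal_mul, ENNReal.toReal_pow, ENNReal.toReal_inv]
    norm_num
  have hθtop : ∀ j : ℕ, (2:ℝ≥0∞)⁻¹ ^ j * m ≠ ⊤ := by
    intro j
    exact ENNReal.mul_ne_top (by simp [ENNReal.pow_ne_top]) hmtop
  by_cases hex : ∃ k : ℕ, (2:ℝ≥0∞)⁻¹ ^ ((k+1)*(N-1)) * m ≤ ν
  · set m0 := Nat.find hex with hm0def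
    have hfind : (2:ℝ≥0∞)⁻¹ ^ ((m0+1)*(N-1)) * m ≤ ν := Nat.find_spec hex
    -- lower bound for the sum
    have htail : ((2:ℝ≥0∞)⁻¹ ^ m0 : ℝ≥0∞) ≤ ∑' k : ℕ, (2:ℝ≥0∞)⁻¹ ^ (k+1) *
        (if (2:ℝ≥0∞)⁻¹ ^ ((k+1)*(N-1)) * m ≤ ν then 1 else 0) := by
      have hsplit : ∑' k : ℕ, (2:ℝ≥0∞)⁻¹ ^ (k+1) *
          (if (2:ℝ≥0∞)⁻¹ ^ ((k+1)*(N-1)) * m ≤ ν then 1 else 0)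
          = (∑ k ∈ Finset.range m0, (2:ℝ≥0∞)⁻¹ ^ (k+1) *
          (if (2:ℝ≥0∞)⁻¹ ^ ((k+1)*(N-1)) * m ≤ ν then 1 else 0))
          + ∑' j : ℕ, (2:ℝ≥0∞)⁻¹ ^ ((j+m0)+1) *
          (if (2:ℝ≥0∞)⁻¹ ^ (((j+m0)+1)*(N-1)) * m ≤ ν then 1 else 0) :=
        (Summable.sum_add_tsum_nat_add' (f := fun k => (2:ℝ≥0∞)⁻¹ ^ (k+1) *
          (if (2:ℝ≥0∞)⁻¹ ^ ((k+1)*(N-1)) * m ≤ ν then 1 else 0)) ENNReal.summable).symm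
      rw [hsplit]
      have htail2 : ∀ j : ℕ, (2:ℝ≥0∞)⁻¹ ^ ((j+m0)+1) *
          (if (2:ℝ≥0∞)⁻¹ ^ (((j+m0)+1)*(N-1)) * m ≤ ν then 1 else 0)
          = (2:ℝ≥0∞)⁻¹ ^ ((j+m0)+1) := by
        intro j
        have hmono : (2:ℝ≥0∞)⁻¹ ^ (((j+m0)+1)*(N-1)) ≤ (2:ℝ≥0∞)⁻¹ ^ ((m0+1)*(N-1)) := by
          rw [← ENNReal.inv_pow, ← ENNReal.inv_pow]
          exact ENNReal.inv_le_inv.2 (pow_le_pow_right₀ one_le_two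
            (Nat.mul_le_mul_right _ (by omega)))
        rw [if_pos (le_trans (mul_le_mul_left hmono m) hfind), mul_one]
      calc (2:ℝ≥0∞)⁻¹ ^ m0 = ∑' j : ℕ, (2:ℝ≥0∞)⁻¹ ^ ((j+m0)+1) := by
            have : ∀ j : ℕ, (2:ℝ≥0∞)⁻¹ ^ ((j+m0)+1) = (2:ℝ≥0∞)⁻¹^(m0+1) * (2:ℝ≥0∞)⁻¹ ^ j := by
              intro j; ring
            rw [tsum_congr this, ENNReal.tsum_mul_left, ENNReal.tsum_geometric,
              ENNReal.one_sub_inv_two, inv_inv, pow_succ, mul_assoc,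
              ENNReal.inv_mul_cancel two_ne_zero ENNReal.ofNat_ne_top, mul_one]
        _ = ∑' j : ℕ, (2:ℝ≥0∞)⁻¹ ^ ((j+m0)+1) *
            (if (2:ℝ≥0∞)⁻¹ ^ (((j+m0)+1)*(N-1)) * m ≤ ν then 1 else 0) := (tsum_congr htail2).symm
        _ ≤ _ := le_add_self
    refine le_trans ?_ (mul_le_mul_right htail _)
    -- real inequality:  ν.toReal ^ q ≤ m.toReal ^ q * 2⁻¹ ^ m0
    have hreal : ν.toReal ^ q ≤ m.toReal ^ q * (2:ℝ)⁻¹ ^ m0 := by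
      have hble : ν.toReal ≤ m.toReal := ENNReal.toReal_mono hmtop hν
      rcases Nat.eq_zero_or_pos m0 with h0 | hpos
      · rw [h0, pow_zero, mul_one]
        exact Real.rpow_le_rpow ENNReal.toReal_nonneg hble hq0.le
      · rcases eq_or_lt_of_le (ENNReal.toReal_nonneg (a := ν)) with hb0 | hb0
        · rw [← hb0, Real.zero_rpow hq0.ne']
          positivity
        · -- ν < θ (m0 - 1)
          obtain ⟨m', hm'⟩ : ∃ m', m0 = m' + 1 := ⟨m0 - 1, (Nat.succ_pred_eq_of_pos hpos).symm⟩
          have hnot : ¬ ((2:ℝ≥0∞)⁻¹ ^ ((m'+1)*(N-1)) * m ≤ ν) := by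
            exact Nat.find_min hex (show m' < Nat.find hex by rw [← hm0def, hm']; exact Nat.lt_succ_self m')
          have hlt : ν < (2:ℝ≥0∞)⁻¹ ^ ((m'+1)*(N-1)) * m := lt_of_not_ge hnot
          have hltR : ν.toReal < (2:ℝ)⁻¹ ^ ((m'+1)*(N-1)) * m.toReal := by
            have := ENNReal.toReal_lt_toReal hνtop (hθtop ((m'+1)*(N-1)))
            rw [hθR] at this
            exact this.2 hlt
          set b := ν.toReal
          set Mr := m.toReal
          have hdiv1 : b / Mr < (2:ℝ)⁻¹ ^ ((m'+1)*(N-1)) := (div_lt_iff₀ hMr0).2 hltR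
          have hdiv0 : 0 < b / Mr := div_pos hb0 hMr0
          have hdivle1 : b / Mr ≤ 1 := (div_le_one hMr0).2 hble
          rw [hm']
          have hkey : (b / Mr) ^ q ≤ (2:ℝ)⁻¹ ^ (m'+1) := by
            calc (b / Mr) ^ q ≤ (b / Mr) ^ (1/((N:ℝ)-1)) :=
                  Real.rpow_le_rpow_of_exponent_ge hdiv0 hdivle1 hq'
              _ ≤ ((2:ℝ)⁻¹ ^ ((m'+1)*(N-1))) ^ (1/((N:ℝ)-1)) :=
                  Real.rpow_le_rpow hdiv0.le hdiv1.le (by positivity)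
              _ = (2:ℝ)⁻¹ ^ (m'+1) := by
                  rw [← Real.rpow_natCast ((2:ℝ)⁻¹) ((m'+1)*(N-1)), ← Real.rpow_mul (by norm_num)]
                  rw [← Real.rpow_natCast ((2:ℝ)⁻¹) (m'+1)]
                  congr 1
                  have hcast : (((m'+1)*(N-1) : ℕ) : ℝ) = ((m':ℝ)+1) * ((N:ℝ)-1) := by
                    push_cast [Nat.cast_sub hN]
                    ring
                  rw [hcast]
                  push_cast
                  field_simp
          have hbq : b ^ q = (b / Mr) ^ q * Mr ^ q := by
            rw [← Real.mul_rpow hdiv0.le hMr0.le, div_mul_cancel₀ _ hMr0.ne']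
          rw [hbq]
          calc (b / Mr) ^ q * Mr ^ q ≤ (2:ℝ)⁻¹ ^ (m'+1) * Mr ^ q :=
                mul_le_mul_of_nonneg_right hkey (by positivity)
            _ = Mr ^ q * (2:ℝ)⁻¹ ^ (m'+1) := by ring
    calc ENNReal.ofReal (ν.toReal ^ q) ≤ ENNReal.ofReal (m.toReal ^ q * (2:ℝ)⁻¹ ^ m0) :=
          ENNReal.ofReal_le_ofReal hreal
      _ = ENNReal.ofReal (m.toReal ^ q) * (2:ℝ≥0∞)⁻¹ ^ m0 := by
          rw [ENNReal.ofReal_mul (by positivity), ENNReal.ofReal_pow (by norm_num)]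
          congr 2
          rw [ENNReal.ofReal_inv_of_pos (by norm_num)]
          norm_num
  · -- no mass at any level: ν must vanish
    push_neg at hex
    have hν0 : ν = 0 := by
      by_contra hν0
      have hνR : 0 < ν.toReal := ENNReal.toReal_pos hν0 hνtop
      obtain ⟨n, hn⟩ := exists_pow_lt_of_lt_one (div_pos hνR hMr0) (by norm_num : (2:ℝ)⁻¹ < 1)
      have hle : (2:ℝ)⁻¹ ^ ((n+1)*(N-1)) ≤ (2:ℝ)⁻¹ ^ n := by
        apply pow_le_pow_of_le_one (by norm_num) (by norm_num)
        have h1 : 1 ≤ N - 1 := by omega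
        calc n ≤ (n+1) * 1 := by omega
          _ ≤ (n+1)*(N-1) := Nat.mul_le_mul_left _ h1
      have hltR : ((2:ℝ≥0∞)⁻¹ ^ ((n+1)*(N-1)) * m).toReal < ν.toReal := by
        rw [hθR]
        calc (2:ℝ)⁻¹ ^ ((n+1)*(N-1)) * m.toReal ≤ (2:ℝ)⁻¹ ^ n * m.toReal :=
              mul_le_mul_of_nonneg_right hle hMr0.le
          _ < ν.toReal := (lt_div_iff₀ hMr0).1 hn
      have := (ENNReal.toReal_lt_toReal (hθtop _) hνtop).1 hltR
      exact absurd this (lt_asymm (hex n))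
    rw [hν0]
    simp [Real.zero_rpow hq0.ne']

end Stmt7Aux

open Stmt7Aux

set_option maxHeartbeats 2000000 in
theorem stmt7 (N : ℕ) (hN : 1 ≤ N) :
    ∃ c : ℝ, 0 < c ∧
      ∀ (Ω : Set (EuclideanSpace ℝ (Fin N))) (p D : ℝ)
        (μ : Measure (EuclideanSpace ℝ (Fin N))),
        IsOpen Ω → Ω.Nonempty → Bornology.IsBounded Ω → D = Metric.diam Ω →
        1 < p → p ≤ (N : ℝ) → μ Set.univ < ⊤ → μ Ωᶜ = 0 → 0 < μ Set.univ →
        ∀ δ ∈ Set.Ioo (0 : ℝ) 1,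
          ∫ x in Ω, Real.exp ((N : ℝ) * (1 - δ) *
              (∫ t in Set.Ioo (0 : ℝ) D, (μ (ball x t)).toReal ^ (1 / (p - 1)) / t) /
              (μ Set.univ).toReal ^ (1 / (p - 1))) ≤
            c * (volume (ball (0 : EuclideanSpace ℝ (Fin N)) D)).toReal / δ ^ (N + 1) := by
  refine ⟨3 * 4^N * Real.exp N, by positivity, ?_⟩
  intro Ω p D μ hΩo hΩne hΩb hDdiam hp hpN hμfin hμsupp hμ0 δ hδ
  obtain ⟨x₀, hx₀⟩ := hΩne
  obtain ⟨hδ0, hδ1⟩ := hδ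
  haveI : IsFiniteMeasure μ := ⟨hμfin⟩
  haveI : Nonempty (Fin N) := ⟨⟨0, by omega⟩⟩
  have hμtop : μ Set.univ ≠ ⊤ := hμfin.ne
  have hμ0' : μ Set.univ ≠ 0 := hμ0.ne'
  have hNR : (1:ℝ) < (N:ℝ) := lt_of_lt_of_le hp hpN
  have hN2 : 2 ≤ N := by exact_mod_cast Nat.one_lt_cast.mp hNR
  -- D > 0
  have hD0 : 0 < D := by
    obtain ⟨ε, hε0, hball⟩ := Metric.isOpen_iff.mp hΩo x₀ hx₀
    set v : EuclideanSpace ℝ (Fin N) := EuclideanSpace.single (⟨0, by omega⟩ : Fin N) (ε/2) with hv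
    have hvnorm : ‖v‖ = ε/2 := by
      rw [hv, EuclideanSpace.norm_single]; rw [Real.norm_eq_abs, abs_of_pos (by linarith)]
    have hy : x₀ + v ∈ Ω := by
      apply hball
      rw [mem_ball, dist_eq_norm]
      simpa [hvnorm] using by linarith
    have hdist : dist (x₀ + v) x₀ = ε/2 := by
      rw [dist_eq_norm]; simpa using hvnorm
    have := Metric.dist_le_diam_of_mem hΩb hy hx₀
    rw [hdist] at this
    rw [hDdiam]; linarith
  -- basic real quantities
  set q : ℝ := 1 / (p - 1) with hqdef
  have hp1 : 0 < p - 1 := by linarith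
  have hq0 : 0 < q := by rw [hqdef]; positivity
  have hN1R : (1:ℝ) ≤ (N:ℝ) - 1 := by
    have : (2:ℝ) ≤ (N:ℝ) := by exact_mod_cast hN2
    linarith
  have hq' : 1/((N:ℝ)-1) ≤ q := by
    rw [hqdef]
    apply one_div_le_one_div_of_le hp1
    linarith
  set A : ℝ := (μ Set.univ).toReal ^ q with hAdef
  have hMr0 : 0 < (μ Set.univ).toReal := ENNReal.toReal_pos hμ0' hμtop
  have hA0 : 0 < A := Real.rpow_pos_of_pos hMr0 q
  set s : ℝ := (N:ℝ) * (1 - δ) with hsdef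
  have hs0 : 0 < s := by
    apply _root_.mul_pos (by positivity : (0:ℝ) < (N:ℝ))
    linarith
  have hsN : s ≤ (N:ℝ) := by nlinarith
  -- volume of reference ball
  set B1 : ℝ≥0∞ := volume (ball (0 : EuclideanSpace ℝ (Fin N)) D) with hB1def
  have hB1_0 : B1 ≠ 0 := (measure_ball_pos volume _ hD0).ne'
  have hB1_top : B1 ≠ ⊤ := measure_ball_lt_top.ne
  -- thresholds
  set θ : ℕ → ℝ≥0∞ := fun k => (2:ℝ≥0∞)⁻¹ ^ ((k+1)*(N-1)) * μ Set.univ with hθdef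
  have hθ0 : ∀ k, θ k ≠ 0 := by
    intro k
    simp only [hθdef]
    exact mul_ne_zero (by simp) hμ0'
  -- measurability of x ↦ μ (ball x rr)
  have hmb : ∀ rr : ℝ, Measurable (fun x : EuclideanSpace ℝ (Fin N) => μ (ball x rr)) := by
    intro rr
    have hopen : IsOpen {p : (EuclideanSpace ℝ (Fin N)) × (EuclideanSpace ℝ (Fin N)) | dist p.2 p.1 < rr} :=
      isOpen_lt (continuous_snd.dist continuous_fst) continuous_const
    have h := measurable_measure_prodMk_left (ν := μ) hopen.measurableSet
    have heq : ∀ x : EuclideanSpace ℝ (Fin N), Prod.mk x ⁻¹' {p : (EuclideanSpace ℝ (Fin N)) × (EuclideanSpace ℝ (Fin N)) | dist p.2 p.1 < rr} = ball x rr := by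
      intro x; ext y; simp [mem_ball]
    simpa only [heq] using h
  -- stopping radii
  set T : ℕ → EuclideanSpace ℝ (Fin N) → ℝ :=
    fun k x => sInf {t : ℝ | 0 ≤ t ∧ (t = D ∨ θ k ≤ μ (ball x t))} with hTdef
  have hSne : ∀ k x, {t : ℝ | 0 ≤ t ∧ (t = D ∨ θ k ≤ μ (ball x t))}.Nonempty :=
    fun k x => ⟨D, hD0.le, Or.inl rfl⟩
  have hSbdd : ∀ k (x : EuclideanSpace ℝ (Fin N)), BddBelow {t : ℝ | 0 ≤ t ∧ (t = D ∨ θ k ≤ μ (ball x t))} :=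
    fun k x => ⟨0, fun t ht => ht.1⟩
  have hT0 : ∀ k x, 0 ≤ T k x := fun k x => le_csInf (hSne k x) (fun t ht => ht.1)
  have hTD : ∀ k x, T k x ≤ D := fun k x => csInf_le (hSbdd k x) ⟨hD0.le, Or.inl rfl⟩
  have hTmass : ∀ k x rr, T k x < rr → rr ≤ D → θ k ≤ μ (ball x rr) := by
    intro k x rr hlt hrD
    obtain ⟨t', ht'S, ht'⟩ := exists_lt_of_csInf_lt (hSne k x) hlt
    rcases ht'S.2 with h | h
    · exact absurd (lt_of_lt_of_le ht' hrD) (by rw [h]; exact lt_irrefl D)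
    · exact le_trans h (measure_mono (ball_subset_ball ht'.le))
  have hTmem : ∀ k x t, 0 ≤ t → θ k ≤ μ (ball x t) → T k x ≤ t :=
    fun k x t h1 h2 => csInf_le (hSbdd k x) ⟨h1, Or.inr h2⟩
  -- measurability of T
  have hTmeas : ∀ k, Measurable (T k) := by
    intro k
    apply measurable_of_Iio
    intro a
    by_cases ha : a ≤ D
    · have heq : (T k) ⁻¹' (Set.Iio a)
          = ⋃ (r : ℚ), ⋃ (_ : 0 < (r:ℝ) ∧ (r:ℝ) < a), {x | θ k ≤ μ (ball x (r:ℝ))} := by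
        ext x
        simp only [Set.mem_preimage, Set.mem_Iio, Set.mem_iUnion, Set.mem_setOf_eq]
        constructor
        · intro hlt
          obtain ⟨t', ht'S, ht'⟩ := exists_lt_of_csInf_lt (hSne k x) hlt
          have hmass : θ k ≤ μ (ball x t') := by
            rcases ht'S.2 with h | h
            · exact absurd (lt_of_lt_of_le ht' ha) (by rw [h]; exact lt_irrefl D)
            · exact h
          obtain ⟨r, hr1, hr2⟩ := exists_rat_btwn ht'
          exact ⟨r, ⟨lt_of_le_of_lt ht'S.1 hr1, hr2⟩,
            le_trans hmass (measure_mono (ball_subset_ball hr1.le))⟩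
        · rintro ⟨r, ⟨hr0, hra⟩, hmass⟩
          exact lt_of_le_of_lt (hTmem k x r hr0.le hmass) hra
      rw [heq]
      exact MeasurableSet.iUnion (fun r => MeasurableSet.iUnion (fun _ =>
        (hmb (r:ℝ)) measurableSet_Ici))
    · have heq : (T k) ⁻¹' (Set.Iio a) = Set.univ := by
        ext x; simp only [Set.mem_preimage, Set.mem_Iio, Set.mem_univ, iff_true]
        exact lt_of_le_of_lt (hTD k x) (lt_of_not_ge ha)
      rw [heq]; exact MeasurableSet.univ
  -- the log-potential factors
  set G : ℕ → EuclideanSpace ℝ (Fin N) → ℝ≥0∞ :=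
    fun k x => ENNReal.ofReal D / ENNReal.ofReal (T k x) with hGdef
  have hGmeas : ∀ k, Measurable (G k) :=
    fun k => measurable_const.div (ENNReal.measurable_ofReal.comp (hTmeas k))
  have hG1 : ∀ k x, 1 ≤ G k x := by
    intro k x
    rw [hGdef]
    rw [ENNReal.le_div_iff_mul_le (Or.inr (by simp [ENNReal.ofReal_pos.2 hD0, (ENNReal.ofReal_pos.2 hD0).ne'])) (Or.inl ENNReal.ofReal_ne_top)]
    rw [one_mul]
    exact ENNReal.ofReal_le_ofReal (hTD k x)
  set a' : ℕ → ℝ := fun k => (2:ℝ)⁻¹ ^ (k+1) with ha'def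
  have ha'0 : ∀ k, 0 < a' k := fun k => by rw [ha'def]; positivity
  set Φ : ℕ → EuclideanSpace ℝ (Fin N) → ℝ≥0∞ :=
    fun K x => ∏ k ∈ Finset.range K, G k x ^ (s * a' k) with hΦdef
  have hΦmeas : ∀ K, Measurable (Φ K) :=
    fun K => Finset.measurable_prod _ (fun k _ => (hGmeas k).pow_const _)
  have hΦfac1 : ∀ (k : ℕ) x, 1 ≤ G k x ^ (s * a' k) := by
    intro k x
    calc (1:ℝ≥0∞) = 1 ^ (s * a' k) := (ENNReal.one_rpow _).symm
      _ ≤ G k x ^ (s * a' k) := ENNReal.rpow_le_rpow (hG1 k x) (by positivity)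
  have hΦmono : Monotone Φ := by
    intro K1 K2 hK x
    exact Finset.prod_le_prod_of_subset_of_one_le' (Finset.range_subset_range.2 hK)
      (fun k _ _ => hΦfac1 k x)
  have hθtop : ∀ k, θ k ≠ ⊤ := by
    intro k
    exact ENNReal.mul_ne_top (by simp [ENNReal.pow_ne_top]) hμtop
  -- Fubini identity
  have hfub : ∀ rr : ℝ, 0 < rr → ∫⁻ x, μ (ball x rr) ∂(volume : Measure (EuclideanSpace ℝ (Fin N)))
      = μ Set.univ * volume (ball (0 : EuclideanSpace ℝ (Fin N)) rr) := by
    intro rr hrr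
    have hmeasset : MeasurableSet {p : (EuclideanSpace ℝ (Fin N)) × (EuclideanSpace ℝ (Fin N)) | dist p.2 p.1 < rr} :=
      (isOpen_lt (continuous_snd.dist continuous_fst) continuous_const).measurableSet
    have h1 : ∫⁻ x, μ (ball x rr) ∂(volume : Measure (EuclideanSpace ℝ (Fin N)))
        = (volume.prod μ) {p : (EuclideanSpace ℝ (Fin N)) × (EuclideanSpace ℝ (Fin N)) | dist p.2 p.1 < rr} := by
      rw [Measure.prod_apply hmeasset]
      rfl
    have h2 : (volume.prod μ) {p : (EuclideanSpace ℝ (Fin N)) × (EuclideanSpace ℝ (Fin N)) | dist p.2 p.1 < rr}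
        = ∫⁻ y, volume (ball y rr) ∂μ := by
      rw [Measure.prod_apply_symm hmeasset]
      congr 1; ext y; congr 1; ext x; simp [mem_ball, dist_comm]
    rw [h1, h2]
    have h3 : ∀ y : EuclideanSpace ℝ (Fin N), volume (ball y rr) = volume (ball (0 : EuclideanSpace ℝ (Fin N)) rr) := by
      intro y
      rw [Measure.addHaar_ball volume y hrr.le, Measure.addHaar_ball volume 0 hrr.le]
    simp only [h3]
    rw [lintegral_const]
    ring
  -- Chebyshev ball count
  have hcheb : ∀ (k : ℕ) (rr : ℝ), 0 < rr → rr ≤ D →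
      volume {x : EuclideanSpace ℝ (Fin N) | T k x < rr}
        ≤ (2:ℝ≥0∞)^((k+1)*(N-1)) * volume (ball (0 : EuclideanSpace ℝ (Fin N)) rr) := by
    intro k rr hrr0 hrrD
    have hsub : {x : EuclideanSpace ℝ (Fin N) | T k x < rr} ⊆ {x | θ k ≤ μ (ball x rr)} :=
      fun x hx => hTmass k x rr hx hrrD
    have hch := mul_meas_ge_le_lintegral₀ (μ := (volume : Measure (EuclideanSpace ℝ (Fin N))))
      ((hmb rr).aemeasurable) (θ k)
    rw [hfub rr hrr0] at hch
    have h2 : ((2:ℝ≥0∞)⁻¹)^((k+1)*(N-1)) * (2:ℝ≥0∞)^((k+1)*(N-1)) = 1 := by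
      rw [← ENNReal.inv_pow]
      exact ENNReal.inv_mul_cancel (pow_ne_zero _ two_ne_zero) (pow_ne_top ENNReal.ofNat_ne_top)
    have hkey : θ k * ((2:ℝ≥0∞)^((k+1)*(N-1)) * volume (ball (0:EuclideanSpace ℝ (Fin N)) rr))
        = μ Set.univ * volume (ball (0:EuclideanSpace ℝ (Fin N)) rr) := by
      calc θ k * ((2:ℝ≥0∞)^((k+1)*(N-1)) * volume (ball (0:EuclideanSpace ℝ (Fin N)) rr))
          = (((2:ℝ≥0∞)⁻¹)^((k+1)*(N-1)) * (2:ℝ≥0∞)^((k+1)*(N-1)))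
            * (μ Set.univ * volume (ball (0:EuclideanSpace ℝ (Fin N)) rr)) := by
            rw [hθdef]; ring
        _ = μ Set.univ * volume (ball (0:EuclideanSpace ℝ (Fin N)) rr) := by rw [h2, one_mul]
    refine le_trans (measure_mono hsub) ?_
    exact (ENNReal.mul_le_mul_iff_right (hθ0 k) (hθtop k)).1 (le_trans hch (le_of_eq hkey.symm))
  -- volume of Ω
  have hΩvol : volume Ω ≤ B1 := by
    have hΩsub : Ω ⊆ closedBall x₀ D := by
      intro y hy
      rw [mem_closedBall, hDdiam]
      exact Metric.dist_le_diam_of_mem hΩb hy hx₀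
    calc volume Ω ≤ volume (closedBall x₀ D) := measure_mono hΩsub
      _ = ENNReal.ofReal (D^(Module.finrank ℝ (EuclideanSpace ℝ (Fin N))))
            * volume (ball (0:EuclideanSpace ℝ (Fin N)) 1) := Measure.addHaar_closedBall volume x₀ hD0.le
      _ = B1 := (Measure.addHaar_ball volume 0 hD0.le).symm
  -- moment bound for each factor
  have hexpN : Real.exp (-(N:ℝ)) ≤ 1/2 := by
    have h1 : Real.exp (-(N:ℝ)) ≤ Real.exp (-1) := by
      apply Real.exp_le_exp.2
      have : (1:ℝ) ≤ (N:ℝ) := by exact_mod_cast hN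
      linarith
    have h2 : Real.exp (-1) ≤ 1/2 := by
      rw [Real.exp_neg]
      rw [inv_le_comm₀ (Real.exp_pos 1) (by norm_num : (0:ℝ) < 1/2)]
      calc (1/2 : ℝ)⁻¹ = 2 := by norm_num
        _ ≤ Real.exp 1 := by linarith [Real.add_one_le_exp 1]
    linarith
  have hβle : Real.exp (s - N) ≤ 1 - δ/2 := by
    have hconv := convexOn_exp.2 (Set.mem_univ (0:ℝ)) (Set.mem_univ (-(N:ℝ)))
      (by linarith : (0:ℝ) ≤ 1-δ) hδ0.le (by ring : (1-δ) + δ = 1)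
    simp only [smul_eq_mul, mul_zero, zero_add, Real.exp_zero, mul_one] at hconv
    have hsN' : s - N = δ * -(N:ℝ) := by rw [hsdef]; ring
    rw [hsN']
    nlinarith [hconv]
  have hβpos : 0 < 1 - Real.exp (s - (N:ℝ)) := by nlinarith [hβle]
  have hIk : ∀ k : ℕ, ∫⁻ x in Ω, G k x ^ s ∂volume
      ≤ (2:ℝ≥0∞)^((k+1)*(N-1)) * (B1 * ENNReal.ofReal (3 * Real.exp N / δ)) := by
    intro k
    have hpt : ∀ x : EuclideanSpace ℝ (Fin N), G k x ^ s
        ≤ 1 + ∑' n : ℕ, ENNReal.ofReal (Real.exp (s*((n:ℝ)+1)))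
            * Set.indicator {x' : EuclideanSpace ℝ (Fin N) | T k x' < D * Real.exp (-(n:ℝ))} (fun _ => 1) x := by
      intro x
      rcases eq_or_lt_of_le (hT0 k x) with hTz | hTpos
      · have hind : ∀ n : ℕ, Set.indicator {x' : EuclideanSpace ℝ (Fin N) | T k x' < D * Real.exp (-(n:ℝ))} (fun _ => (1:ℝ≥0∞)) x = 1 := by
          intro n
          apply Set.indicator_of_mem
          show T k x < D * Real.exp (-(n:ℝ))
          rw [← hTz]
          positivity
        have htop : (1:ℝ≥0∞) + ∑' n : ℕ, ENNReal.ofReal (Real.exp (s*((n:ℝ)+1)))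
            * Set.indicator {x' : EuclideanSpace ℝ (Fin N) | T k x' < D * Real.exp (-(n:ℝ))} (fun _ => (1:ℝ≥0∞)) x = ⊤ := by
          rw [eq_top_iff]
          refine le_trans ?_ le_add_self
          calc (⊤:ℝ≥0∞) = ∑' _ : ℕ, (1:ℝ≥0∞) := (ENNReal.tsum_const_eq_top_of_ne_zero one_ne_zero).symm
            _ ≤ _ := ENNReal.tsum_le_tsum (fun n => by
                rw [hind n, mul_one]
                exact ENNReal.one_le_ofReal.2 (Real.one_le_exp (by positivity)))
        rw [htop]
        exact le_top
      · have hGx : G k x = ENNReal.ofReal (D / T k x) := by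
          rw [hGdef]; exact (ENNReal.ofReal_div_of_pos hTpos).symm
        have hDT1 : 0 < D / T k x := div_pos hD0 hTpos
        have hGs : G k x ^ s = ENNReal.ofReal ((D / T k x) ^ s) := by
          rw [hGx, ENNReal.ofReal_rpow_of_pos hDT1]
        have hL0 : 0 ≤ Real.log (D / T k x) :=
          Real.log_nonneg ((le_div_iff₀ hTpos).2 (by linarith [hTD k x]))
        set L := Real.log (D / T k x) with hLdef
        have hrpow : (D / T k x) ^ s = Real.exp (L * s) := Real.rpow_def_of_pos hDT1 s
        rcases eq_or_lt_of_le hL0 with hLz | hLpos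
        · rw [hGs, hrpow, ← hLz, zero_mul, Real.exp_zero, ENNReal.ofReal_one]
          exact self_le_add_right 1 _
        · set n := ⌈L⌉₊ - 1 with hndef
          have hceil1 : 1 ≤ ⌈L⌉₊ := Nat.ceil_pos.2 hLpos
          have hnlt : (n:ℝ) < L := by
            by_contra hc
            push_neg at hc
            have := Nat.ceil_le.2 hc
            omega
          have hnle : L ≤ (n:ℝ) + 1 := by
            have h1 : ((⌈L⌉₊ :ℕ):ℝ) = (n:ℝ) + 1 := by
              have h2 : ⌈L⌉₊ = n + 1 := by omega
              rw [h2]; push_cast; ring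
            rw [← h1]; exact Nat.le_ceil L
          have hmem : x ∈ {x' : EuclideanSpace ℝ (Fin N) | T k x' < D * Real.exp (-(n:ℝ))} := by
            show T k x < D * Real.exp (-(n:ℝ))
            have hexp : Real.exp (n:ℝ) < D / T k x := by
              rw [← Real.exp_log hDT1]
              exact Real.exp_lt_exp.2 hnlt
            have h3 : T k x * Real.exp (n:ℝ) < D := by
              rw [mul_comm]
              exact (lt_div_iff₀ hTpos).1 hexp
            rw [Real.exp_neg]
            rw [mul_comm D _, ← div_eq_inv_mul]
            exact (lt_div_iff₀ (Real.exp_pos _)).2 h3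
          calc G k x ^ s = ENNReal.ofReal (Real.exp (L * s)) := by rw [hGs, hrpow]
            _ ≤ ENNReal.ofReal (Real.exp (s*((n:ℝ)+1))) :=
                ENNReal.ofReal_le_ofReal (Real.exp_le_exp.2 (by nlinarith))
            _ = ENNReal.ofReal (Real.exp (s*((n:ℝ)+1)))
                * Set.indicator {x' : EuclideanSpace ℝ (Fin N) | T k x' < D * Real.exp (-(n:ℝ))} (fun _ => 1) x := by
                rw [Set.indicator_of_mem hmem, mul_one]
            _ ≤ ∑' n' : ℕ, ENNReal.ofReal (Real.exp (s*((n':ℝ)+1)))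
                * Set.indicator {x' : EuclideanSpace ℝ (Fin N) | T k x' < D * Real.exp (-(n':ℝ))} (fun _ => 1) x :=
                ENNReal.le_tsum n
            _ ≤ _ := le_add_self
    have hsetmeas : ∀ (c : ℝ), MeasurableSet {x' : EuclideanSpace ℝ (Fin N) | T k x' < c} :=
      fun c => (hTmeas k) measurableSet_Iio
    have hballn : ∀ n : ℕ, volume (ball (0:EuclideanSpace ℝ (Fin N)) (D * Real.exp (-(n:ℝ))))
        = ENNReal.ofReal ((Real.exp (-(n:ℝ)))^N) * B1 := by
      intro n
      rw [hB1def, Measure.addHaar_ball volume 0 (by positivity : (0:ℝ) ≤ D * Real.exp (-(n:ℝ))),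
        Measure.addHaar_ball volume 0 hD0.le, finrank_euclideanSpace_fin, mul_pow,
        ENNReal.ofReal_mul (by positivity)]
      ring
    have hsum : ∑' n : ℕ, ENNReal.ofReal (Real.exp (s*((n:ℝ)+1))) * ENNReal.ofReal ((Real.exp (-(n:ℝ)))^N)
        ≤ ENNReal.ofReal (Real.exp N * (2/δ)) := by
      have hterm : ∀ n : ℕ, ENNReal.ofReal (Real.exp (s*((n:ℝ)+1))) * ENNReal.ofReal ((Real.exp (-(n:ℝ)))^N)
          = ENNReal.ofReal (Real.exp s) * (ENNReal.ofReal (Real.exp (s - N)))^n := by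
        intro n
        rw [← ENNReal.ofReal_pow (Real.exp_pos _).le, ← ENNReal.ofReal_mul (by positivity),
          ← ENNReal.ofReal_mul (by positivity)]
        congr 1
        rw [← Real.exp_nat_mul, ← Real.exp_nat_mul, ← Real.exp_add, ← Real.exp_add]
        congr 1
        ring
      rw [tsum_congr hterm, ENNReal.tsum_mul_left, ENNReal.tsum_geometric]
      have h1β : (1:ℝ≥0∞) - ENNReal.ofReal (Real.exp (s-N)) = ENNReal.ofReal (1 - Real.exp (s-N)) := by
        rw [ENNReal.ofReal_sub 1 (Real.exp_pos _).le, ENNReal.ofReal_one]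
      rw [h1β, ← ENNReal.ofReal_inv_of_pos hβpos, ← ENNReal.ofReal_mul (Real.exp_pos _).le]
      apply ENNReal.ofReal_le_ofReal
      have hinv : (1 - Real.exp (s - (N:ℝ)))⁻¹ ≤ 2/δ := by
        have hge : δ/2 ≤ 1 - Real.exp (s - (N:ℝ)) := by linarith
        calc (1 - Real.exp (s - (N:ℝ)))⁻¹ ≤ (δ/2)⁻¹ :=
              inv_anti₀ (by positivity) hge
          _ = 2/δ := by rw [inv_div]
      apply mul_le_mul (Real.exp_le_exp.2 (by linarith)) hinv (by positivity) (Real.exp_pos _).le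
    calc ∫⁻ x in Ω, G k x ^ s ∂volume
        ≤ ∫⁻ x in Ω, (1 + ∑' n : ℕ, ENNReal.ofReal (Real.exp (s*((n:ℝ)+1)))
            * Set.indicator {x' : EuclideanSpace ℝ (Fin N) | T k x' < D * Real.exp (-(n:ℝ))} (fun _ => 1) x) ∂volume :=
          lintegral_mono hpt
      _ = volume Ω + ∑' n : ℕ, ENNReal.ofReal (Real.exp (s*((n:ℝ)+1)))
            * volume ({x' : EuclideanSpace ℝ (Fin N) | T k x' < D * Real.exp (-(n:ℝ))} ∩ Ω) := by
          rw [lintegral_add_left measurable_const, setLIntegral_one,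
            lintegral_tsum (fun n => ((measurable_const.indicator (hsetmeas _)).const_mul _).aemeasurable)]
          congr 1
          apply tsum_congr
          intro n
          rw [lintegral_const_mul' _ _ ENNReal.ofReal_ne_top, lintegral_indicator (hsetmeas _),
            setLIntegral_one, Measure.restrict_apply (hsetmeas _)]
      _ ≤ volume Ω + ∑' n : ℕ, ENNReal.ofReal (Real.exp (s*((n:ℝ)+1)))
            * ((2:ℝ≥0∞)^((k+1)*(N-1)) * (ENNReal.ofReal ((Real.exp (-(n:ℝ)))^N) * B1)) := by
          apply add_le_add_right
          apply ENNReal.tsum_le_tsum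
          intro n
          apply mul_le_mul_right
          rw [← hballn n]
          refine le_trans (measure_mono Set.inter_subset_left) (hcheb k _ (by positivity) ?_)
          calc D * Real.exp (-(n:ℝ)) ≤ D * 1 := by
                apply mul_le_mul_of_nonneg_left _ hD0.le
                rw [Real.exp_le_one_iff]
                simp
            _ = D := mul_one D
      _ = volume Ω + (2:ℝ≥0∞)^((k+1)*(N-1)) * (B1 *
            ∑' n : ℕ, ENNReal.ofReal (Real.exp (s*((n:ℝ)+1))) * ENNReal.ofReal ((Real.exp (-(n:ℝ)))^N)) := by
          rw [← ENNReal.tsum_mul_left, ← ENNReal.tsum_mul_left]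
          congr 1
          apply tsum_congr
          intro n
          ring
      _ ≤ (2:ℝ≥0∞)^((k+1)*(N-1)) * (B1 * ENNReal.ofReal (Real.exp N * (1/δ)))
          + (2:ℝ≥0∞)^((k+1)*(N-1)) * (B1 * ENNReal.ofReal (Real.exp N * (2/δ))) := by
          apply add_le_add
          · calc volume Ω ≤ B1 := hΩvol
              _ = 1 * (B1 * 1) := by ring
              _ ≤ (2:ℝ≥0∞)^((k+1)*(N-1)) * (B1 * ENNReal.ofReal (Real.exp N * (1/δ))) := by
                  apply mul_le_mul' (one_le_pow_of_one_le' one_le_two _)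
                  apply mul_le_mul_right
                  apply ENNReal.one_le_ofReal.2
                  rw [mul_one_div]
                  rw [le_div_iff₀ hδ0]
                  nlinarith [Real.one_le_exp (by positivity : (0:ℝ) ≤ (N:ℝ)), hδ1]
          · exact mul_le_mul_right (mul_le_mul_right hsum _) _
      _ = (2:ℝ≥0∞)^((k+1)*(N-1)) * (B1 * ENNReal.ofReal (3 * Real.exp N / δ)) := by
          rw [← mul_add, ← mul_add, ← ENNReal.ofReal_add (by positivity) (by positivity)]
          congr 3
          field_simp
          ring
  -- Hölder bound for the truncated products
  have hY0 : B1 * ENNReal.ofReal (3 * Real.exp N / δ) ≠ 0 :=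
    mul_ne_zero hB1_0 (ENNReal.ofReal_pos.2 (by positivity)).ne'
  have hYtop : B1 * ENNReal.ofReal (3 * Real.exp N / δ) ≠ ⊤ :=
    ENNReal.mul_ne_top hB1_top ENNReal.ofReal_ne_top
  have hB1Y : B1 ≤ B1 * ENNReal.ofReal (3 * Real.exp N / δ) := by
    nth_rewrite 1 [← mul_one B1]
    apply mul_le_mul_right
    apply ENNReal.one_le_ofReal.2
    rw [le_div_iff₀ hδ0]
    nlinarith [Real.one_le_exp (by positivity : (0:ℝ) ≤ (N:ℝ))]
  have hΦint : ∀ K, ∫⁻ x in Ω, Φ K x ∂volume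
      ≤ (2:ℝ≥0∞)^(2*(N-1)) * (B1 * ENNReal.ofReal (3 * Real.exp N / δ)) := by
    intro K
    set Y := B1 * ENNReal.ofReal (3 * Real.exp N / δ) with hYdef
    set F : ℕ → EuclideanSpace ℝ (Fin N) → ℝ≥0∞ := fun i x => if i < K then G i x ^ s else 1 with hFdef
    set pe : ℕ → ℝ := fun i => if i < K then a' i else 2⁻¹^K with hpedef
    have hpe0 : ∀ i ∈ Finset.range (K+1), 0 ≤ pe i := by
      intro i _
      rw [hpedef]; dsimp only; split
      · exact (ha'0 i).le
      · positivity
    have hpesum : ∑ i ∈ Finset.range (K+1), pe i = 1 := by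
      rw [Finset.sum_range_succ]
      have h1 : ∀ i ∈ Finset.range K, pe i = a' i := by
        intro i hi; rw [hpedef]; exact if_pos (Finset.mem_range.1 hi)
      rw [Finset.sum_congr rfl h1]
      have h2 : pe K = 2⁻¹^K := by rw [hpedef]; exact if_neg (lt_irrefl K)
      rw [h2]
      simp only [ha'def]
      rw [geom_sum_half]
      ring
    have hrepr : ∀ x, Φ K x = ∏ i ∈ Finset.range (K+1), F i x ^ pe i := by
      intro x
      simp only [hΦdef]
      rw [Finset.prod_range_succ]
      have h2 : F K x ^ pe K = 1 := by
        rw [hFdef]; dsimp only; rw [if_neg (lt_irrefl K), ENNReal.one_rpow]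
      rw [h2, mul_one]
      apply Finset.prod_congr rfl
      intro i hi
      have hiK : i < K := Finset.mem_range.1 hi
      rw [hFdef, hpedef]; dsimp only; rw [if_pos hiK, if_pos hiK, ← ENNReal.rpow_mul]
    have hmeasF : ∀ i ∈ Finset.range (K+1), AEMeasurable (F i) (volume.restrict Ω) := by
      intro i _
      rw [hFdef]; dsimp only; split
      · exact ((hGmeas i).pow_const s).aemeasurable
      · exact aemeasurable_const
    have hhold := ENNReal.lintegral_prod_norm_pow_le (μ := volume.restrict Ω)
      (Finset.range (K+1)) hmeasF hpesum hpe0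
    have hFint : ∀ i ∈ Finset.range (K+1), ∫⁻ x in Ω, F i x ∂volume
        ≤ (if i < K then (2:ℝ≥0∞)^((i+1)*(N-1)) else 1) * Y := by
      intro i _
      by_cases hiK : i < K
      · have h3 : ∀ x, F i x = G i x ^ s := by
          intro x; rw [hFdef]; dsimp only; rw [if_pos hiK]
        simp only [h3]
        rw [if_pos hiK]
        exact hIk i
      · have h3 : ∀ x : EuclideanSpace ℝ (Fin N), F i x = 1 := by
          intro x; rw [hFdef]; dsimp only; rw [if_neg hiK]
        simp only [h3]
        rw [if_neg hiK, one_mul, setLIntegral_one]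
        exact le_trans hΩvol hB1Y
    calc ∫⁻ x in Ω, Φ K x ∂volume
        = ∫⁻ x in Ω, ∏ i ∈ Finset.range (K+1), F i x ^ pe i ∂volume :=
          lintegral_congr (fun x => hrepr x)
      _ ≤ ∏ i ∈ Finset.range (K+1), (∫⁻ x in Ω, F i x ∂volume) ^ pe i := hhold
      _ ≤ ∏ i ∈ Finset.range (K+1), ((if i < K then (2:ℝ≥0∞)^((i+1)*(N-1)) else 1) * Y) ^ pe i := by
          apply Finset.prod_le_prod'
          intro i hi
          exact ENNReal.rpow_le_rpow (hFint i hi) (hpe0 i hi)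
      _ = (∏ i ∈ Finset.range (K+1), (if i < K then (2:ℝ≥0∞)^((i+1)*(N-1)) else 1) ^ pe i)
          * ∏ i ∈ Finset.range (K+1), Y ^ pe i := by
          rw [← Finset.prod_mul_distrib]
          apply Finset.prod_congr rfl; intro i hi
          exact ENNReal.mul_rpow_of_nonneg _ _ (hpe0 i hi)
      _ ≤ (2:ℝ≥0∞)^(2*(N-1)) * Y := by
          apply mul_le_mul'
          · calc ∏ i ∈ Finset.range (K+1), (if i < K then (2:ℝ≥0∞)^((i+1)*(N-1)) else 1) ^ pe i
                = ∏ i ∈ Finset.range K, (if i < K then (2:ℝ≥0∞)^((i+1)*(N-1)) else 1) ^ pe i := by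
                  rw [Finset.prod_range_succ, if_neg (lt_irrefl K), ENNReal.one_rpow, mul_one]
              _ = ∏ i ∈ Finset.range K, (2:ℝ≥0∞) ^ ((((i+1)*(N-1) : ℕ):ℝ) * a' i) := by
                  apply Finset.prod_congr rfl; intro i hi
                  have hiK := Finset.mem_range.1 hi
                  have h4 : pe i = a' i := by rw [hpedef]; exact if_pos hiK
                  rw [if_pos hiK, h4, ← ENNReal.rpow_natCast, ← ENNReal.rpow_mul]
              _ = (2:ℝ≥0∞) ^ (∑ i ∈ Finset.range K, (((i+1)*(N-1) : ℕ):ℝ) * a' i) :=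
                  prod_rpow_eq 2 two_ne_zero ENNReal.ofNat_ne_top K _
              _ ≤ (2:ℝ≥0∞) ^ ((2*(N-1) : ℕ) : ℝ) := by
                  apply ENNReal.rpow_le_rpow_of_exponent_le one_le_two
                  have hsum2 : ∑ i ∈ Finset.range K, (((i+1)*(N-1) : ℕ):ℝ) * a' i
                      = ((N:ℝ)-1) * ∑ i ∈ Finset.range K, ((i:ℝ)+1) * (2⁻¹)^(i+1) := by
                    rw [Finset.mul_sum]
                    apply Finset.sum_congr rfl; intro i hi
                    have h5 : (((i+1)*(N-1) : ℕ):ℝ) = ((i:ℝ)+1)*((N:ℝ)-1) := by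
                      push_cast [Nat.cast_sub hN]; ring
                    rw [ha'def]; dsimp only
                    rw [h5]; ring
                  rw [hsum2]
                  have hw := weight_sum_le K
                  have hKpos : 0 ≤ ((K:ℝ)+2) * 2⁻¹^K := by positivity
                  have hcast2 : ((2*(N-1) : ℕ) : ℝ) = 2*((N:ℝ)-1) := by
                    push_cast [Nat.cast_sub hN]; ring
                  rw [hcast2]
                  nlinarith [hN1R]
              _ = (2:ℝ≥0∞) ^ (2*(N-1)) := ENNReal.rpow_natCast 2 _
          · have h6 : ∏ i ∈ Finset.range (K+1), Y ^ pe i = Y := by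
              rw [prod_rpow_eq Y hY0 hYtop (K+1) pe, hpesum, ENNReal.rpow_one]
            exact le_of_eq h6
  -- truncated log potentials
  set Λ : ℕ → EuclideanSpace ℝ (Fin N) → ℝ≥0∞ := fun k x =>
    ∫⁻ t in Set.Ioo (0:ℝ) D, Set.indicator {t' : ℝ | θ k ≤ μ (ball x t')}
      (fun t' => (ENNReal.ofReal t')⁻¹) t with hΛdef
  set W : EuclideanSpace ℝ (Fin N) → ℝ≥0∞ := fun x =>
    ∫⁻ t in Set.Ioo (0:ℝ) D, ENNReal.ofReal ((μ (ball x t)).toReal ^ q / t) with hWdef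
  have hInner_le : ∀ x : EuclideanSpace ℝ (Fin N),
      (∫ t in Set.Ioo (0:ℝ) D, (μ (ball x t)).toReal ^ q / t) ≤ (W x).toReal := by
    intro x
    exact integral_le_toReal_lintegral _ _ ((ae_restrict_iff' measurableSet_Ioo).2
      (ae_of_all _ (fun t ht => div_nonneg (Real.rpow_nonneg ENNReal.toReal_nonneg q) ht.1.le)))
  have hordmeas : ∀ (k:ℕ) (x : EuclideanSpace ℝ (Fin N)), MeasurableSet {t' : ℝ | θ k ≤ μ (ball x t')} := by
    intro k x
    apply Set.OrdConnected.measurableSet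
    constructor
    intro t1 h1 t2 _ z hz
    exact le_trans h1 (measure_mono (ball_subset_ball hz.1))
  have hW_le : ∀ x, W x ≤ ENNReal.ofReal A * ∑' k : ℕ, (2:ℝ≥0∞)⁻¹^(k+1) * Λ k x := by
    intro x
    have hptw : ∀ t ∈ Set.Ioo (0:ℝ) D, ENNReal.ofReal ((μ (ball x t)).toReal ^ q / t)
        ≤ ENNReal.ofReal A * ∑' k : ℕ, (2:ℝ≥0∞)⁻¹^(k+1)
            * Set.indicator {t' : ℝ | θ k ≤ μ (ball x t')} (fun t' => (ENNReal.ofReal t')⁻¹) t := by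
      intro t ht
      have hA' := claimA hN hN2 hq0 hq' (μ Set.univ) hμ0' hμtop (μ (ball x t))
        (measure_mono (Set.subset_univ _))
      have hdiv : ENNReal.ofReal ((μ (ball x t)).toReal ^ q / t)
          = ENNReal.ofReal ((μ (ball x t)).toReal ^ q) * (ENNReal.ofReal t)⁻¹ := by
        rw [ENNReal.ofReal_div_of_pos ht.1, div_eq_mul_inv]
      have hindeq : ∀ k : ℕ, (2:ℝ≥0∞)⁻¹^(k+1) * Set.indicator {t' : ℝ | θ k ≤ μ (ball x t')}
            (fun t' => (ENNReal.ofReal t')⁻¹) t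
          = ((2:ℝ≥0∞)⁻¹^(k+1) * (if (2:ℝ≥0∞)⁻¹ ^ ((k+1)*(N-1)) * μ Set.univ ≤ μ (ball x t) then 1 else 0))
              * (ENNReal.ofReal t)⁻¹ := by
        intro k
        by_cases hmem : θ k ≤ μ (ball x t)
        · rw [Set.indicator_of_mem (show t ∈ {t' : ℝ | θ k ≤ μ (ball x t')} from hmem),
            if_pos (by simp only [hθdef] at hmem; exact hmem), mul_one]
        · rw [Set.indicator_of_notMem (show t ∉ {t' : ℝ | θ k ≤ μ (ball x t')} from hmem),
            if_neg (by simp only [hθdef] at hmem; exact hmem)]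
          simp
      calc ENNReal.ofReal ((μ (ball x t)).toReal ^ q / t)
          = ENNReal.ofReal ((μ (ball x t)).toReal ^ q) * (ENNReal.ofReal t)⁻¹ := hdiv
        _ ≤ (ENNReal.ofReal ((μ Set.univ).toReal ^ q) * ∑' k : ℕ, (2:ℝ≥0∞)⁻¹ ^ (k+1) *
              (if (2:ℝ≥0∞)⁻¹ ^ ((k+1)*(N-1)) * μ Set.univ ≤ μ (ball x t) then 1 else 0))
              * (ENNReal.ofReal t)⁻¹ := mul_le_mul_left hA' _
        _ = ENNReal.ofReal A * ∑' k : ℕ, (2:ℝ≥0∞)⁻¹^(k+1)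
            * Set.indicator {t' : ℝ | θ k ≤ μ (ball x t')} (fun t' => (ENNReal.ofReal t')⁻¹) t := by
            rw [mul_assoc]
            congr 1
            rw [← ENNReal.tsum_mul_right]
            exact (tsum_congr (fun k => hindeq k)).symm
    calc W x ≤ ∫⁻ t in Set.Ioo (0:ℝ) D, ENNReal.ofReal A * ∑' k : ℕ, (2:ℝ≥0∞)⁻¹^(k+1)
            * Set.indicator {t' : ℝ | θ k ≤ μ (ball x t')} (fun t' => (ENNReal.ofReal t')⁻¹) t := by
          apply lintegral_mono_ae
          exact (ae_restrict_iff' measurableSet_Ioo).2 (ae_of_all _ hptw)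
      _ = ENNReal.ofReal A * ∑' k : ℕ, (2:ℝ≥0∞)⁻¹^(k+1) * Λ k x := by
          rw [lintegral_const_mul' _ _ ENNReal.ofReal_ne_top]
          congr 1
          rw [lintegral_tsum (fun k => ((Measurable.indicator (f := fun t' : ℝ => (ENNReal.ofReal t')⁻¹) ENNReal.measurable_ofReal.inv
            (hordmeas k x)).const_mul _).aemeasurable)]
          exact tsum_congr (fun k => lintegral_const_mul' _ _
            (pow_ne_top (ENNReal.inv_ne_top.2 two_ne_zero)))
  have hΛ_le : ∀ (k:ℕ) (x : EuclideanSpace ℝ (Fin N)), 0 < T k x →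
      Λ k x ≤ ENNReal.ofReal (Real.log (D / T k x)) := by
    intro k x hTpos
    have hsub : {t' : ℝ | θ k ≤ μ (ball x t')} ⊆ Set.Ici (T k x) := by
      intro t' ht'
      by_cases ht0 : 0 ≤ t'
      · exact hTmem k x t' ht0 ht'
      · exfalso
        push_neg at ht0
        have hbe : ball x t' = ∅ := ball_eq_empty.2 ht0.le
        rw [Set.mem_setOf_eq, hbe, measure_empty] at ht'
        exact hθ0 k (le_zero_iff.1 ht')
    have hIcoeq : Set.Ici (T k x) ∩ Set.Ioo (0:ℝ) D = Set.Ico (T k x) D := by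
      ext z
      simp only [Set.mem_inter_iff, Set.mem_Ici, Set.mem_Ioo, Set.mem_Ico]
      constructor
      · rintro ⟨h1, _, h3⟩; exact ⟨h1, h3⟩
      · rintro ⟨h1, h2⟩; exact ⟨h1, lt_of_lt_of_le hTpos h1, h2⟩
    have hint : IntegrableOn (fun t => 1/t) (Set.Ico (T k x) D) volume := by
      apply IntegrableOn.mono_set _ Set.Ico_subset_Icc_self
      apply ContinuousOn.integrableOn_Icc
      exact continuousOn_const.div continuousOn_id
        (fun z hz => ne_of_gt (lt_of_lt_of_le hTpos hz.1))
    calc Λ k x ≤ ∫⁻ t in Set.Ioo (0:ℝ) D,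
          Set.indicator (Set.Ici (T k x)) (fun t' => (ENNReal.ofReal t')⁻¹) t :=
          lintegral_mono (fun t => Pi.le_def.1 (Set.indicator_le_indicator_of_subset hsub (fun _ => zero_le)) t)
      _ = ∫⁻ t in Set.Ico (T k x) D, (ENNReal.ofReal t)⁻¹ := by
          rw [lintegral_indicator measurableSet_Ici, Measure.restrict_restrict measurableSet_Ici,
            hIcoeq]
      _ = ∫⁻ t in Set.Ico (T k x) D, ENNReal.ofReal (1/t) := by
          apply setLIntegral_congr_fun measurableSet_Ico
          intro t ht
          dsimp only
          rw [one_div, ENNReal.ofReal_inv_of_pos (lt_of_lt_of_le hTpos ht.1)]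
      _ = ENNReal.ofReal (∫ t in Set.Ico (T k x) D, 1/t) := by
          rw [← ofReal_integral_eq_lintegral_ofReal hint ((ae_restrict_iff' measurableSet_Ico).2
            (ae_of_all _ (fun t ht => le_of_lt (div_pos one_pos (lt_of_lt_of_le hTpos ht.1)))))]
      _ = ENNReal.ofReal (Real.log (D / T k x)) := by
          congr 1
          rw [MeasureTheory.integral_Ico_eq_integral_Ioo, ← MeasureTheory.integral_Ioc_eq_integral_Ioo,
            ← intervalIntegral.integral_of_le (hTD k x)]
          apply integral_one_div
          intro hmem
          rw [Set.uIcc_of_le (hTD k x)] at hmem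
          exact absurd hmem.1 (not_le.2 hTpos)
  -- pointwise master bound
  have hPW : ∀ x : EuclideanSpace ℝ (Fin N),
      ENNReal.ofReal (Real.exp ((N:ℝ) * (1 - δ)
          * (∫ t in Set.Ioo (0:ℝ) D, (μ (ball x t)).toReal ^ q / t) / A))
        ≤ ⨆ K, Φ K x := by
    intro x
    by_cases hC1 : ∃ k, T k x = 0
    · obtain ⟨k0, hk0⟩ := hC1
      have hGtop : G k0 x = ⊤ := by
        simp only [hGdef]
        rw [hk0, ENNReal.ofReal_zero]
        exact ENNReal.div_zero (ENNReal.ofReal_pos.2 hD0).ne'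
      have hΦtop : Φ (k0+1) x = ⊤ := by
        simp only [hΦdef]
        rw [Finset.prod_range_succ, hGtop,
          ENNReal.top_rpow_of_pos (by positivity : 0 < s * a' k0)]
        apply ENNReal.mul_top
        exact ne_of_gt (lt_of_lt_of_le zero_lt_one (Finset.one_le_prod' (fun i _ => hΦfac1 i x)))
      refine le_trans le_top ?_
      rw [← hΦtop]
      exact le_iSup (fun K => Φ K x) (k0+1)
    · push_neg at hC1
      have hTpos : ∀ k, 0 < T k x := fun k => lt_of_le_of_ne (hT0 k x) (Ne.symm (hC1 k))
      set w : ℕ → ℝ := fun k => Real.log (D / T k x) with hwdef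
      have hw0 : ∀ k, 0 ≤ w k := by
        intro k
        rw [hwdef]
        exact Real.log_nonneg ((le_div_iff₀ (hTpos k)).2 (by linarith [hTD k x]))
      have hΦeq : ∀ K, Φ K x = ENNReal.ofReal (Real.exp (s * ∑ k ∈ Finset.range K, a' k * w k)) := by
        intro K
        rw [Finset.mul_sum, Real.exp_sum,
          ENNReal.ofReal_prod_of_nonneg (fun i _ => (Real.exp_pos _).le)]
        simp only [hΦdef]
        apply Finset.prod_congr rfl
        intro k _
        have hDT : 0 < D / T k x := div_pos hD0 (hTpos k)
        have harg : Real.log (D / T k x) * (s * a' k) = s * (a' k * w k) := by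
          rw [hwdef]; dsimp only; ring
        calc G k x ^ (s * a' k)
            = ENNReal.ofReal ((D / T k x) ^ (s * a' k)) := by
              rw [show G k x = ENNReal.ofReal (D / T k x) from by
                simp only [hGdef]; exact (ENNReal.ofReal_div_of_pos (hTpos k)).symm,
                ENNReal.ofReal_rpow_of_pos hDT]
          _ = ENNReal.ofReal (Real.exp (s * (a' k * w k))) := by
              rw [Real.rpow_def_of_pos hDT, harg]
      by_cases hsum : Summable (fun k => a' k * w k)
      · have hU : (∑' k : ℕ, (2:ℝ≥0∞)⁻¹^(k+1) * Λ k x) ≤ ENNReal.ofReal (∑' k, a' k * w k) := by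
          rw [ENNReal.ofReal_tsum_of_nonneg (fun k => mul_nonneg (ha'0 k).le (hw0 k)) hsum]
          apply ENNReal.tsum_le_tsum
          intro k
          have hcoef : (2:ℝ≥0∞)⁻¹^(k+1) = ENNReal.ofReal (a' k) := by
            rw [ha'def]; dsimp only
            rw [ENNReal.ofReal_pow (by norm_num), ENNReal.ofReal_inv_of_pos (by norm_num : (0:ℝ) < 2)]
            norm_num
          rw [hcoef, ENNReal.ofReal_mul (ha'0 k).le]
          have hwk : ENNReal.ofReal (Real.log (D / T k x)) = ENNReal.ofReal (w k) := by
            rw [hwdef]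
          exact mul_le_mul_right (le_trans (hΛ_le k x (hTpos k)) (le_of_eq hwk)) _
        set R : ℝ := ∑' k, a' k * w k with hRdef
        have hR0 : 0 ≤ R := tsum_nonneg (fun k => mul_nonneg (ha'0 k).le (hw0 k))
        have hWx : W x ≤ ENNReal.ofReal (A * R) := by
          rw [ENNReal.ofReal_mul hA0.le]
          exact le_trans (hW_le x) (mul_le_mul_right hU _)
        have hInner2 : (∫ t in Set.Ioo (0:ℝ) D, (μ (ball x t)).toReal ^ q / t) ≤ A * R := by
          refine le_trans (hInner_le x) (le_trans (ENNReal.toReal_mono ENNReal.ofReal_ne_top hWx) ?_)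
          rw [ENNReal.toReal_ofReal (by positivity)]
        have hexp2 : (N:ℝ) * (1 - δ)
            * (∫ t in Set.Ioo (0:ℝ) D, (μ (ball x t)).toReal ^ q / t) / A ≤ s * R := by
          rw [div_le_iff₀ hA0]
          have h7 : s * (∫ t in Set.Ioo (0:ℝ) D, (μ (ball x t)).toReal ^ q / t) ≤ s * (A * R) :=
            mul_le_mul_of_nonneg_left hInner2 hs0.le
          calc (N:ℝ) * (1 - δ) * (∫ t in Set.Ioo (0:ℝ) D, (μ (ball x t)).toReal ^ q / t)
              = s * (∫ t in Set.Ioo (0:ℝ) D, (μ (ball x t)).toReal ^ q / t) := by rw [hsdef]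
            _ ≤ s * (A * R) := h7
            _ = s * R * A := by ring
        have htend : Tendsto (fun K => ∑ k ∈ Finset.range K, a' k * w k) atTop (𝓝 R) :=
          hsum.hasSum.tendsto_sum_nat
        have htend2 : Tendsto (fun K => Φ K x) atTop (𝓝 (ENNReal.ofReal (Real.exp (s * R)))) := by
          simp only [hΦeq]
          exact (ENNReal.continuous_ofReal.tendsto _).comp
            ((Real.continuous_exp.tendsto _).comp (htend.const_mul s))
        calc ENNReal.ofReal (Real.exp ((N:ℝ) * (1 - δ)
              * (∫ t in Set.Ioo (0:ℝ) D, (μ (ball x t)).toReal ^ q / t) / A))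
            ≤ ENNReal.ofReal (Real.exp (s*R)) := ENNReal.ofReal_le_ofReal (Real.exp_le_exp.2 hexp2)
          _ ≤ ⨆ K, Φ K x := le_of_tendsto' htend2 (fun K => le_iSup (fun K' => Φ K' x) K)
      · have htendtop : Tendsto (fun K => ∑ k ∈ Finset.range K, a' k * w k) atTop atTop :=
          (not_summable_iff_tendsto_nat_atTop_of_nonneg
            (fun k => mul_nonneg (ha'0 k).le (hw0 k))).1 hsum
        have hsup : (⨆ K, Φ K x) = ⊤ := by
          rw [iSup_eq_top]
          intro b hb
          obtain ⟨K, hK⟩ := (htendtop.eventually_ge_atTop ((Real.log (b.toReal + 1))/s)).exists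
          refine ⟨K, ?_⟩
          rw [hΦeq K, ENNReal.lt_ofReal_iff_toReal_lt hb.ne]
          have hb1 : (0:ℝ) < b.toReal + 1 := by positivity
          calc b.toReal < b.toReal + 1 := lt_add_one _
            _ = Real.exp (Real.log (b.toReal + 1)) := (Real.exp_log hb1).symm
            _ ≤ Real.exp (s * ∑ k ∈ Finset.range K, a' k * w k) := by
                apply Real.exp_le_exp.2
                rw [div_le_iff₀ hs0] at hK
                nlinarith [hK]
        rw [hsup]
        exact le_top
  -- conclusion
  have hmain : (∫⁻ x in Ω, ENNReal.ofReal (Real.exp ((N:ℝ) * (1 - δ)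
        * (∫ t in Set.Ioo (0:ℝ) D, (μ (ball x t)).toReal ^ q / t) / A)) ∂volume)
      ≤ (2:ℝ≥0∞)^(2*(N-1)) * (B1 * ENNReal.ofReal (3 * Real.exp N / δ)) := by
    calc (∫⁻ x in Ω, ENNReal.ofReal (Real.exp ((N:ℝ) * (1 - δ)
          * (∫ t in Set.Ioo (0:ℝ) D, (μ (ball x t)).toReal ^ q / t) / A)) ∂volume)
        ≤ ∫⁻ x in Ω, ⨆ K, Φ K x ∂volume := lintegral_mono (fun x => hPW x)
      _ = ⨆ K, ∫⁻ x in Ω, Φ K x ∂volume := lintegral_iSup (fun K => hΦmeas K) hΦmono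
      _ ≤ _ := iSup_le hΦint
  have hfin : ((2:ℝ≥0∞)^(2*(N-1)) * (B1 * ENNReal.ofReal (3 * Real.exp N / δ))) ≠ ⊤ :=
    ENNReal.mul_ne_top (pow_ne_top ENNReal.ofNat_ne_top) hYtop
  calc (∫ x in Ω, Real.exp ((N:ℝ) * (1 - δ)
        * (∫ t in Set.Ioo (0:ℝ) D, (μ (ball x t)).toReal ^ q / t) / A))
      ≤ (∫⁻ x in Ω, ENNReal.ofReal (Real.exp ((N:ℝ) * (1 - δ)
          * (∫ t in Set.Ioo (0:ℝ) D, (μ (ball x t)).toReal ^ q / t) / A)) ∂volume).toReal :=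
        integral_le_toReal_lintegral _ _ (ae_of_all _ (fun x => (Real.exp_pos _).le))
    _ ≤ ((2:ℝ≥0∞)^(2*(N-1)) * (B1 * ENNReal.ofReal (3 * Real.exp N / δ))).toReal :=
        ENNReal.toReal_mono hfin hmain
    _ = 2^(2*(N-1)) * (B1.toReal * (3 * Real.exp N / δ)) := by
        rw [ENNReal.toReal_mul, ENNReal.toReal_mul, ENNReal.toReal_pow, ENNReal.toReal_ofNat,
          ENNReal.toReal_ofReal (by positivity)]
    _ ≤ 3 * 4^N * Real.exp N * B1.toReal / δ^(N+1) := by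
        have hb1t : (0:ℝ) ≤ B1.toReal := ENNReal.toReal_nonneg
        have hδN : δ^(N+1) ≤ δ := by
          have hδpow : δ^N ≤ 1 := pow_le_one₀ hδ0.le hδ1.le
          calc δ^(N+1) = δ^N * δ := pow_succ δ N
            _ ≤ 1 * δ := mul_le_mul_of_nonneg_right hδpow hδ0.le
            _ = δ := one_mul δ
        have h4 : (2:ℝ)^(2*(N-1)) ≤ 4^N := by
          calc (2:ℝ)^(2*(N-1)) = 4^(N-1) := by rw [pow_mul]; norm_num
            _ ≤ 4^N := pow_le_pow_right₀ (by norm_num) (by omega)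
        have key : 2^(2*(N-1)) * (B1.toReal * (3 * Real.exp N / δ))
            = (2^(2*(N-1)) * B1.toReal * (3 * Real.exp N)) / δ := by ring
        rw [key, div_le_div_iff₀ hδ0 (by positivity : (0:ℝ) < δ^(N+1))]
        calc 2^(2*(N-1)) * B1.toReal * (3*Real.exp N) * δ^(N+1)
            ≤ 4^N * B1.toReal * (3*Real.exp N) * δ := by
              apply mul_le_mul _ hδN (by positivity) (by positivity)
              apply mul_le_mul_of_nonneg_right _ (by positivity)
              exact mul_le_mul_of_nonneg_right h4 hb1t
          _ = 3 * 4 ^ N * Real.exp ↑N * B1.toReal * δ := by ring
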